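/- Let γ ∈ (0,1/2) and r ∈ ℕ, and let R, P be disjoint dyadic cubes with R r-good. If d(R,P) > max(ℓR, ℓP)^{1−γ} · min(ℓR, ℓP)^γ, then there exists a dyadic cube K containing both P and R such that ℓ(K) · (min(ℓP, ℓR)/ℓ(K))^γ ≤ 2^r d(R,P). -/

import Mathlib

open MeasureTheory ENNReal Set

structure DyadicCube (d : ℕ) where
  j : ℤ
  m : Fin d → ℤ

namespace DyadicCube

variable {d : ℕ}

/-- side length `2^{-j}` of the dyadic cube. -/
noncomputable def side (Q : DyadicCube d) : ℝ := 2 ^ (-Q.j)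

/-- the dyadic cube `2^{-j}([0,1)^d + m)` as a subset of `ℝ^d`. -/
def toSet (Q : DyadicCube d) : Set (Fin d → ℝ) :=
  {x | ∀ i, (Q.m i : ℝ) * 2 ^ (-Q.j) ≤ x i ∧ x i < ((Q.m i : ℝ) + 1) * 2 ^ (-Q.j)}

/-- the concentric triple `3Q`. -/
def triple (Q : DyadicCube d) : Set (Fin d → ℝ) :=
  {x | ∀ i, ((Q.m i : ℝ) - 1) * 2 ^ (-Q.j) ≤ x i ∧ x i < ((Q.m i : ℝ) + 2) * 2 ^ (-Q.j)}

/-- the centre of the cube. -/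
noncomputable def center (Q : DyadicCube d) : Fin d → ℝ :=
  fun i => ((Q.m i : ℝ) + 1 / 2) * 2 ^ (-Q.j)

/-- the `k`-fold dyadic ancestor `Q^{(k)}`. -/
def ancestor (k : ℕ) (Q : DyadicCube d) : DyadicCube d :=
  ⟨Q.j - k, fun i => Int.fdiv (Q.m i) (2 ^ k)⟩

/-- the `k`-grandchildren `ch_k(Q)`. -/
def children (k : ℕ) (Q : DyadicCube d) : Set (DyadicCube d) :=
  {P | P.j = Q.j + k ∧ P.toSet ⊆ Q.toSet}

/-- distance between two sets in the `ℓ^∞` metric of `ℝ^d`. -/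
noncomputable def sdist (A B : Set (Fin d → ℝ)) : ℝ :=
  (⨅ a ∈ A, EMetric.infEdist a B).toReal

/-- average `⟨f⟩_A` of `f` over `A`. -/
noncomputable def avg (f : (Fin d → ℝ) → ℝ) (A : Set (Fin d → ℝ)) : ℝ :=
  (volume A).toReal⁻¹ * ∫ x in A, f x

/-- average `⟨|f|⟩_A`. -/
noncomputable def avgAbs (f : (Fin d → ℝ) → ℝ) (A : Set (Fin d → ℝ)) : ℝ :=
  avg (fun x => |f x|) A

/-- `Q` is `r`-good with parameter `γ`. -/
def IsGood (r : ℕ) (γ : ℝ) (Q : DyadicCube d) : Prop :=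
  ∀ P : DyadicCube d, 2 ^ r * Q.side ≤ P.side →
    Q.side ^ γ * P.side ^ (1 - γ) < sdist Q.toSet (frontier P.toSet)

/-- martingale (Haar) difference `Δ_Q f`. -/
noncomputable def mdiff (f : (Fin d → ℝ) → ℝ) (Q : DyadicCube d) (x : Fin d → ℝ) : ℝ :=
  ∑' J : {J : DyadicCube d // J ∈ children 1 Q},
    Set.indicator J.1.toSet (fun _ => avg f J.1.toSet - avg f Q.toSet) x

/-- `Σ_ε ⟨f, h_Q^ε⟩² = ‖Δ_Q f‖_{L²}²`, the total squared Haar coefficient on `Q`. -/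
noncomputable def haarSq (f : (Fin d → ℝ) → ℝ) (P : DyadicCube d) : ℝ :=
  ∫ x in P.toSet, (mdiff f P x) ^ 2

end DyadicCube

open DyadicCube


namespace DyadicCube

variable {d : ℕ}

lemma side_pos' (Q : DyadicCube d) : 0 < Q.side := zpow_pos two_pos _

/-- the lower-left corner of the cube. -/
noncomputable def myCorner (Q : DyadicCube d) : Fin d → ℝ :=
  fun i => (Q.m i : ℝ) * 2 ^ (-Q.j)

lemma myCorner_mem (Q : DyadicCube d) : myCorner Q ∈ Q.toSet := by
  intro i
  have hu : (0:ℝ) < 2 ^ (-Q.j) := zpow_pos two_pos _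
  refine ⟨le_rfl, ?_⟩
  have : (Q.m i : ℝ) < (Q.m i : ℝ) + 1 := by linarith
  exact mul_lt_mul_of_pos_right this hu

lemma toSet_nonempty' (Q : DyadicCube d) : Q.toSet.Nonempty := ⟨_, myCorner_mem Q⟩

lemma subset_of_le_of_inter {A B : DyadicCube d} (h : B.j ≤ A.j)
    (hx : (A.toSet ∩ B.toSet).Nonempty) : A.toSet ⊆ B.toSet := by
  obtain ⟨x, hxA, hxB⟩ := hx
  intro y hy i
  obtain ⟨h1, h2⟩ := hxA i
  obtain ⟨h3, h4⟩ := hxB i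
  obtain ⟨h5, h6⟩ := hy i
  set k : ℕ := (A.j - B.j).toNat with hk
  have hkk : (k : ℤ) = A.j - B.j := Int.toNat_of_nonneg (by omega)
  have hu : (0:ℝ) < 2 ^ (-A.j) := zpow_pos two_pos _
  have hv : (2:ℝ) ^ (-B.j) = ((2^k : ℤ) : ℝ) * 2 ^ (-A.j) := by
    rw [show -B.j = (k:ℤ) + (-A.j) by omega, zpow_add₀ (two_ne_zero) (k:ℤ) (-A.j)]
    push_cast
    rw [zpow_natCast]
  have hba : B.m i * 2^k ≤ A.m i := by
    have hlt : ((B.m i * 2^k : ℤ) : ℝ) * 2 ^ (-A.j) < ((A.m i : ℝ) + 1) * 2 ^ (-A.j) := by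
      calc ((B.m i * 2^k : ℤ) : ℝ) * 2 ^ (-A.j) = (B.m i : ℝ) * 2 ^ (-B.j) := by
            rw [hv]; push_cast; ring
        _ ≤ x i := h3
        _ < ((A.m i : ℝ) + 1) * 2 ^ (-A.j) := h2
    have := lt_of_mul_lt_mul_right hlt hu.le
    have : ((B.m i * 2^k : ℤ) : ℝ) < ((A.m i + 1 : ℤ) : ℝ) := by push_cast; push_cast at this; linarith
    have := (@Int.cast_lt ℝ _ _ _).mp this
    omega
  have hab : A.m i + 1 ≤ (B.m i + 1) * 2^k := by
    have hlt : ((A.m i : ℤ) : ℝ) * 2 ^ (-A.j) < (((B.m i + 1) * 2^k : ℤ) : ℝ) * 2 ^ (-A.j) := by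
      calc ((A.m i : ℤ) : ℝ) * 2 ^ (-A.j) ≤ x i := h1
        _ < ((B.m i : ℝ) + 1) * 2 ^ (-B.j) := h4
        _ = (((B.m i + 1) * 2^k : ℤ) : ℝ) * 2 ^ (-A.j) := by rw [hv]; push_cast; ring
    have := lt_of_mul_lt_mul_right hlt hu.le
    have := (@Int.cast_lt ℝ _ _ _).mp this
    omega
  constructor
  · calc (B.m i : ℝ) * 2 ^ (-B.j) = ((B.m i * 2^k : ℤ) : ℝ) * 2 ^ (-A.j) := by
          rw [hv]; push_cast; ring
      _ ≤ ((A.m i : ℤ) : ℝ) * 2 ^ (-A.j) := by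
          apply mul_le_mul_of_nonneg_right _ hu.le
          exact_mod_cast hba
      _ ≤ y i := h5
  · calc y i < ((A.m i : ℝ) + 1) * 2 ^ (-A.j) := h6
      _ ≤ (((B.m i + 1) * 2^k : ℤ) : ℝ) * 2 ^ (-A.j) := by
          apply mul_le_mul_of_nonneg_right _ hu.le
          push_cast
          exact_mod_cast hab
      _ = ((B.m i : ℝ) + 1) * 2 ^ (-B.j) := by rw [hv]; push_cast; ring

lemma subset_ancestor' (k : ℕ) (Q : DyadicCube d) : Q.toSet ⊆ (ancestor k Q).toSet := by
  intro x hx i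
  obtain ⟨h1, h2⟩ := hx i
  have hu : (0:ℝ) < 2 ^ (-Q.j) := zpow_pos two_pos _
  have h2k : (0:ℤ) < 2^k := pow_pos two_pos k
  set q : ℤ := Int.fdiv (Q.m i) (2^k) with hq
  have hq1 : q * 2^k ≤ Q.m i := by
    have h := Int.fmod_add_mul_fdiv (Q.m i) (2^k)
    have h' := Int.fmod_nonneg_of_pos (Q.m i) h2k
    nlinarith
  have hq2 : Q.m i < (q + 1) * 2^k := Int.lt_fdiv_add_one_mul_self (Q.m i) h2k
  have hv : (2:ℝ) ^ (-(Q.j - (k:ℕ))) = ((2^k : ℤ) : ℝ) * 2 ^ (-Q.j) := by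
    rw [show -(Q.j - (k:ℕ)) = (k:ℤ) + (-Q.j) by omega, zpow_add₀ (two_ne_zero) (k:ℤ) (-Q.j)]
    push_cast
    rw [zpow_natCast]
  constructor
  · show (q : ℝ) * 2 ^ (-(Q.j - (k:ℕ))) ≤ x i
    calc (q : ℝ) * 2 ^ (-(Q.j - (k:ℕ))) = ((q * 2^k : ℤ) : ℝ) * 2 ^ (-Q.j) := by
          rw [hv]; push_cast; ring
      _ ≤ (Q.m i : ℝ) * 2 ^ (-Q.j) := by
          apply mul_le_mul_of_nonneg_right _ hu.le
          exact_mod_cast hq1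
      _ ≤ x i := h1
  · show x i < ((q : ℝ) + 1) * 2 ^ (-(Q.j - (k:ℕ)))
    calc x i < ((Q.m i : ℝ) + 1) * 2 ^ (-Q.j) := h2
      _ ≤ (((q + 1) * 2^k : ℤ) : ℝ) * 2 ^ (-Q.j) := by
          apply mul_le_mul_of_nonneg_right _ hu.le
          have : ((Q.m i + 1 : ℤ) : ℝ) ≤ (((q + 1) * 2^k : ℤ) : ℝ) := by exact_mod_cast (by omega : Q.m i + 1 ≤ (q+1) * 2^k)
          push_cast at this ⊢
          linarith
      _ = ((q : ℝ) + 1) * 2 ^ (-(Q.j - (k:ℕ))) := by rw [hv]; push_cast; ring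

lemma ancestor_j (k : ℕ) (Q : DyadicCube d) : (ancestor k Q).j = Q.j - k := rfl

lemma side_ancestor (k : ℕ) (Q : DyadicCube d) : (ancestor k Q).side = 2^k * Q.side := by
  show (2:ℝ) ^ (-(Q.j - (k:ℕ))) = 2^k * 2 ^ (-Q.j)
  rw [show -(Q.j - (k:ℕ)) = (k:ℤ) + (-Q.j) by omega, zpow_add₀ (two_ne_zero) (k:ℤ) (-Q.j),
    zpow_natCast]

lemma ancestor_zero' (Q : DyadicCube d) : ancestor 0 Q = Q := by
  cases Q with
  | mk j m =>
    simp only [ancestor, pow_zero, Int.fdiv_one, Nat.cast_zero, sub_zero]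

lemma infEdist_frontier_le {S : DyadicCube d} {a p : Fin d → ℝ} (ha : a ∈ S.toSet)
    (hp : p ∉ S.toSet) : EMetric.infEdist a (frontier S.toSet) ≤ edist a p := by
  have hv : (0:ℝ) < 2 ^ (-S.j) := zpow_pos two_pos _
  have hp' : ∃ i, ¬((S.m i : ℝ) * 2 ^ (-S.j) ≤ p i ∧ p i < ((S.m i : ℝ) + 1) * 2 ^ (-S.j)) := by
    by_contra h
    push_neg at h
    exact hp fun i => h i
  obtain ⟨i, hi⟩ := hp'
  rw [not_and_or, not_le, not_lt] at hi
  obtain ⟨z, hzf, hzd⟩ : ∃ z, z ∈ frontier S.toSet ∧ dist a z ≤ dist a p := by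
    rcases hi with hlt | hge
    · -- p i < lower bound
      set lo : ℝ := (S.m i : ℝ) * 2 ^ (-S.j) with hlo
      refine ⟨Function.update a i lo, ?_, ?_⟩
      · rw [frontier_eq_closure_inter_closure]
        constructor
        · apply subset_closure
          intro k
          by_cases hk : k = i
          · subst hk
            rw [Function.update_self]
            exact ⟨le_rfl, lt_of_le_of_lt (ha k).1 (ha k).2⟩
          · rw [Function.update_of_ne hk]
            exact ha k
        · rw [Metric.mem_closure_iff]
          intro ε hε
          refine ⟨Function.update (Function.update a i lo) i (lo - ε/2), ?_, ?_⟩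
          · intro hmem
            have := (hmem i).1
            rw [Function.update_self] at this
            linarith
          · rw [dist_pi_lt_iff hε]
            intro k
            by_cases hk : k = i
            · subst hk
              rw [Function.update_self, Function.update_self, Real.dist_eq]
              rw [abs_of_nonneg (by linarith)]
              linarith
            · simp [Function.update_of_ne hk, hε]
      · rw [dist_pi_le_iff dist_nonneg]
        intro k
        by_cases hk : k = i
        · subst hk
          rw [Function.update_self, Real.dist_eq, abs_of_nonneg (by linarith [(ha k).1])]
          calc a k - lo ≤ a k - p k := by linarith
            _ ≤ |a k - p k| := le_abs_self _
            _ = dist (a k) (p k) := (Real.dist_eq _ _).symm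
            _ ≤ dist a p := dist_le_pi_dist a p k
        · rw [Function.update_of_ne hk]
          simp [dist_nonneg]
    · -- p i ≥ upper bound
      set hi_ : ℝ := ((S.m i : ℝ) + 1) * 2 ^ (-S.j) with hhi
      refine ⟨Function.update a i hi_, ?_, ?_⟩
      · rw [frontier_eq_closure_inter_closure]
        constructor
        · rw [Metric.mem_closure_iff]
          intro ε hε
          refine ⟨Function.update a i (max (a i) (hi_ - ε/2)), ?_, ?_⟩
          · intro k
            by_cases hk : k = i
            · subst hk
              rw [Function.update_self]
              refine ⟨le_trans (ha k).1 (le_max_left _ _), ?_⟩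
              exact max_lt (ha k).2 (by linarith)
            · rw [Function.update_of_ne hk]
              exact ha k
          · rw [dist_pi_lt_iff hε]
            intro k
            by_cases hk : k = i
            · subst hk
              rw [Function.update_self, Function.update_self, Real.dist_eq]
              have h1 : max (a k) (hi_ - ε/2) < hi_ := max_lt (ha k).2 (by linarith)
              have h2 : hi_ - ε/2 ≤ max (a k) (hi_ - ε/2) := le_max_right _ _
              rw [abs_of_nonneg (by linarith)]
              linarith
            · rw [Function.update_of_ne hk, Function.update_of_ne hk]
              simp [hε]
        · apply subset_closure
          intro hmem
          have := (hmem i).2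
          rw [Function.update_self] at this
          exact absurd this (lt_irrefl _)
      · rw [dist_pi_le_iff dist_nonneg]
        intro k
        by_cases hk : k = i
        · subst hk
          rw [Function.update_self, Real.dist_eq, abs_of_nonpos (by linarith [(ha k).2])]
          calc -(a k - hi_) = hi_ - a k := by ring
            _ ≤ p k - a k := by linarith
            _ ≤ |a k - p k| := by rw [abs_sub_comm]; exact le_abs_self _
            _ = dist (a k) (p k) := (Real.dist_eq _ _).symm
            _ ≤ dist a p := dist_le_pi_dist a p k
        · rw [Function.update_of_ne hk]
          simp [dist_nonneg]
  calc EMetric.infEdist a (frontier S.toSet) ≤ edist a z :=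
        EMetric.infEdist_le_edist_of_mem hzf
    _ ≤ edist a p := by
        rw [edist_dist, edist_dist]
        exact ENNReal.ofReal_le_ofReal hzd

end DyadicCube

/-- Common ancestor lemma: if `R, P` are disjoint dyadic cubes, `R` is `r`-good, the grid has the
common-ancestor property for `P` and `R`, and `d(R,P) > max(ℓR,ℓP)^{1-γ} min(ℓR,ℓP)^γ`, then there
is a dyadic cube `K ⊇ P ∪ R` with `ℓK (min(ℓP,ℓR)/ℓK)^γ ≤ 2^r d(R,P)`. -/
theorem common_ancestor {d : ℕ} (r : ℕ) {γ : ℝ} (hγ : γ ∈ Set.Ioo (0 : ℝ) (1 / 2))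
    (R P : DyadicCube d) (hdisj : Disjoint R.toSet P.toSet) (hgood : IsGood r γ R)
    (hanc : ∃ K : DyadicCube d, P.toSet ⊆ K.toSet ∧ R.toSet ⊆ K.toSet)
    (hd : (max R.side P.side) ^ (1 - γ) * (min R.side P.side) ^ γ < sdist R.toSet P.toSet) :
    ∃ K : DyadicCube d, P.toSet ⊆ K.toSet ∧ R.toSet ⊆ K.toSet ∧
      K.side * (min P.side R.side / K.side) ^ γ ≤ 2 ^ r * sdist R.toSet P.toSet := by
    classical
  obtain ⟨hγ0, hγhalf⟩ := hγ
  have hγ1 : γ < 1 := lt_trans hγhalf (by norm_num)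
  have hsR := side_pos' R
  have hsP := side_pos' P
  -- dispatch d = 0
  rcases Nat.eq_zero_or_pos d with hd0 | hd0
  · exfalso
    subst hd0
    have hx : (fun _ => (0:ℝ)) ∈ R.toSet := fun i => i.elim0
    have hx' : (fun _ => (0:ℝ)) ∈ P.toSet := fun i => i.elim0
    exact Set.disjoint_left.mp hdisj hx hx'
  -- dispatch r = 0
  rcases Nat.eq_zero_or_pos r with hr0 | hr1
  · exfalso
    subst hr0
    have h := hgood R (by norm_num)
    have hcf : myCorner R ∈ frontier R.toSet := by
      rw [frontier_eq_closure_inter_closure]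
      refine ⟨subset_closure (myCorner_mem R), ?_⟩
      rw [Metric.mem_closure_iff]
      intro ε hε
      set i0 : Fin d := ⟨0, hd0⟩
      refine ⟨Function.update (myCorner R) i0 (myCorner R i0 - ε/2), ?_, ?_⟩
      · intro hmem
        have h1 := (hmem i0).1
        rw [Function.update_self] at h1
        have h2 : (R.m i0 : ℝ) * 2 ^ (-R.j) ≤ (R.m i0 : ℝ) * 2 ^ (-R.j) - ε/2 := h1
        linarith
      · rw [dist_pi_lt_iff hε]
        intro k
        by_cases hk : k = i0
        · subst hk
          rw [Function.update_self, Real.dist_eq, abs_of_nonneg (by linarith)]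
          linarith
        · simp [Function.update_of_ne hk, hε]
    have hz : sdist R.toSet (frontier R.toSet) = 0 := by
      unfold sdist
      have h0 : (⨅ a ∈ R.toSet, EMetric.infEdist a (frontier R.toSet)) = 0 := by
        refine le_antisymm ?_ (by simp)
        refine le_trans (iInf₂_le _ (myCorner_mem R)) ?_
        exact le_of_eq (EMetric.infEdist_zero_of_mem hcf)
      rw [h0]
      simp
    rw [hz] at h
    have heq : R.side ^ γ * R.side ^ (1-γ) = R.side := by
      rw [← Real.rpow_add hsR]
      simp
    rw [heq] at h
    exact absurd h (not_lt.mpr hsR.le)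
  -- main case
  obtain ⟨K0, hPK0, hRK0⟩ := hanc
  have hK0j : K0.j ≤ R.j := by
    by_contra h
    push_neg at h
    have hsub : K0.toSet ⊆ R.toSet :=
      subset_of_le_of_inter h.le ⟨myCorner R, hRK0 (myCorner_mem R), myCorner_mem R⟩
    exact Set.disjoint_left.mp hdisj (hsub (hPK0 (myCorner_mem P))) (myCorner_mem P)
  have hex : ∃ n, P.toSet ⊆ (ancestor n R).toSet := by
    refine ⟨(R.j - K0.j).toNat, ?_⟩
    have hjeq : (ancestor (R.j - K0.j).toNat R).j = K0.j := by
      rw [ancestor_j]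
      omega
    have hsub : K0.toSet ⊆ (ancestor (R.j - K0.j).toNat R).toSet := by
      apply subset_of_le_of_inter (le_of_eq hjeq)
      exact ⟨myCorner R, hRK0 (myCorner_mem R), subset_ancestor' _ R (myCorner_mem R)⟩
    exact hPK0.trans hsub
  set N := Nat.find hex with hNdef
  have hNspec : P.toSet ⊆ (ancestor N R).toSet := Nat.find_spec hex
  have hN1 : 1 ≤ N := by
    by_contra h
    push_neg at h
    interval_cases N
    · rw [ancestor_zero'] at hNspec
      exact Set.disjoint_left.mp hdisj (hNspec (myCorner_mem P)) (myCorner_mem P)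
  set K := ancestor N R with hK
  set S := ancestor (N-1) R with hS
  have hSmin : ¬ P.toSet ⊆ S.toSet := Nat.find_min hex (by omega)
  have hRS : R.toSet ⊆ S.toSet := subset_ancestor' _ _
  have hPS : ∀ p ∈ P.toSet, p ∉ S.toSet := by
    intro p hp hpS
    rcases le_total S.j P.j with h | h
    · exact hSmin (subset_of_le_of_inter h ⟨p, hp, hpS⟩)
    · have hsub : S.toSet ⊆ P.toSet := subset_of_le_of_inter h ⟨p, hpS, hp⟩
      exact Set.disjoint_left.mp hdisj (myCorner_mem R) (hsub (hRS (myCorner_mem R)))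
  have hsK := side_pos' K
  have hsS := side_pos' S
  have hKside : K.side = 2^N * R.side := side_ancestor N R
  have hSside : S.side = 2^(N-1) * R.side := side_ancestor (N-1) R
  have hKS : K.side = 2 * S.side := by
    have h2 : (2:ℝ)^N = 2 * 2^(N-1) := by
      calc (2:ℝ)^N = 2^((N-1)+1) := by rw [Nat.sub_add_cancel hN1]
        _ = 2 * 2^(N-1) := by rw [pow_succ]; ring
    rw [hKside, hSside, h2]
    ring
  set D := sdist R.toSet P.toSet with hD
  have hmaxpos : 0 < max R.side P.side := lt_max_iff.mpr (Or.inl hsR)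
  have hminpos : 0 < min R.side P.side := lt_min hsR hsP
  have hDpos : 0 < D := by
    refine lt_trans ?_ hd
    exact mul_pos (Real.rpow_pos_of_pos hmaxpos _) (Real.rpow_pos_of_pos hminpos _)
  refine ⟨K, hNspec, subset_ancestor' _ _, ?_⟩
  have hmin_pos : 0 < min P.side R.side := lt_min hsP hsR
  have hgoal_eq : K.side * (min P.side R.side / K.side) ^ γ
      = K.side ^ (1-γ) * (min P.side R.side) ^ γ := by
    rw [Real.div_rpow hmin_pos.le hsK.le, Real.rpow_sub hsK, Real.rpow_one]
    ring
  rw [hgoal_eq]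
  have hmin_le_R : min P.side R.side ≤ R.side := min_le_right _ _
  have hmin_comm : min P.side R.side = min R.side P.side := min_comm _ _
  rcases le_or_gt N r with hNr | hNr
  · -- small K : use the hypothesis hd directly
    have hKle : K.side ≤ 2^r * R.side := by
      rw [hKside]
      have : (2:ℝ)^N ≤ 2^r := pow_le_pow_right₀ (by norm_num) hNr
      exact mul_le_mul_of_nonneg_right this hsR.le
    have h2r1 : (1:ℝ) ≤ 2^r := one_le_pow₀ (by norm_num)
    calc K.side ^ (1-γ) * (min P.side R.side) ^ γ
        ≤ (2^r * R.side) ^ (1-γ) * (min P.side R.side) ^ γ := by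
          apply mul_le_mul_of_nonneg_right _ (Real.rpow_nonneg hmin_pos.le _)
          exact Real.rpow_le_rpow hsK.le hKle (by linarith)
      _ ≤ 2^r * (R.side ^ (1-γ) * (min P.side R.side) ^ γ) := by
          rw [Real.mul_rpow (by positivity) hsR.le]
          have h1 : ((2:ℝ)^r) ^ (1-γ) ≤ ((2:ℝ)^r) ^ (1:ℝ) :=
            Real.rpow_le_rpow_of_exponent_le h2r1 (by linarith)
          rw [Real.rpow_one] at h1
          have h2 : (0:ℝ) ≤ R.side ^ (1-γ) * (min P.side R.side) ^ γ := by positivity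
          nlinarith [Real.rpow_nonneg hsR.le (1-γ), Real.rpow_nonneg hmin_pos.le γ]
      _ ≤ 2^r * ((max R.side P.side) ^ (1-γ) * (min R.side P.side) ^ γ) := by
          apply mul_le_mul_of_nonneg_left _ (by positivity)
          rw [hmin_comm]
          apply mul_le_mul_of_nonneg_right _ (Real.rpow_nonneg (le_min hsR.le hsP.le) _)
          exact Real.rpow_le_rpow hsR.le (le_max_left _ _) (by linarith)
      _ ≤ 2^r * D := mul_le_mul_of_nonneg_left hd.le (by positivity)
  · -- big K : use goodness of R at scale S
    have hgoodS : R.side ^ γ * S.side ^ (1-γ) < sdist R.toSet (frontier S.toSet) := by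
      apply hgood S
      rw [hSside]
      have : (2:ℝ)^r ≤ 2^(N-1) := pow_le_pow_right₀ (by norm_num) (by omega)
      exact mul_le_mul_of_nonneg_right this hsR.le
    have hfr : sdist R.toSet (frontier S.toSet) ≤ D := by
      rw [hD]
      unfold sdist
      apply ENNReal.toReal_mono
      · refine ne_top_of_le_ne_top (edist_ne_top (myCorner R) (myCorner P)) ?_
        exact iInf₂_le_of_le (myCorner R) (myCorner_mem R)
          (EMetric.infEdist_le_edist_of_mem (myCorner_mem P))
      · refine iInf₂_mono ?_
        intro a ha
        refine EMetric.le_infEdist.2 ?_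
        intro p hp
        exact infEdist_frontier_le (hRS ha) (hPS p hp)
    have hchain : R.side ^ γ * S.side ^ (1-γ) < D := lt_of_lt_of_le hgoodS hfr
    have h2r2 : (2:ℝ) ≤ 2^r := by
      calc (2:ℝ) = 2^1 := (pow_one 2).symm
        _ ≤ 2^r := pow_le_pow_right₀ (by norm_num) hr1
    calc K.side ^ (1-γ) * (min P.side R.side) ^ γ
        = (2:ℝ) ^ (1-γ:ℝ) * S.side ^ (1-γ) * (min P.side R.side) ^ γ := by
          rw [hKS, Real.mul_rpow (by norm_num) hsS.le]
      _ ≤ 2 * (S.side ^ (1-γ) * R.side ^ γ) := by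
          have h1 : (2:ℝ) ^ (1-γ:ℝ) ≤ 2 := by
            calc (2:ℝ) ^ (1-γ:ℝ) ≤ (2:ℝ) ^ (1:ℝ) :=
              Real.rpow_le_rpow_of_exponent_le (by norm_num) (by linarith)
            _ = 2 := Real.rpow_one 2
          have h2 : (min P.side R.side) ^ γ ≤ R.side ^ γ :=
            Real.rpow_le_rpow hmin_pos.le hmin_le_R hγ0.le
          have h3 : (0:ℝ) ≤ S.side ^ (1-γ) := Real.rpow_nonneg hsS.le _
          have h4 : (0:ℝ) ≤ (min P.side R.side) ^ γ := Real.rpow_nonneg hmin_pos.le _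
          calc (2:ℝ) ^ (1-γ:ℝ) * S.side ^ (1-γ) * (min P.side R.side) ^ γ
              ≤ 2 * S.side ^ (1-γ) * (min P.side R.side) ^ γ := by
                exact mul_le_mul_of_nonneg_right (mul_le_mul_of_nonneg_right h1 h3) h4
            _ ≤ 2 * S.side ^ (1-γ) * R.side ^ γ := by
                apply mul_le_mul_of_nonneg_left h2
                positivity
            _ = 2 * (S.side ^ (1-γ) * R.side ^ γ) := by ring
      _ ≤ 2 * D := by nlinarith [hchain]
      _ ≤ 2^r * D := mul_le_mul_of_nonneg_right h2r2 hDpos.le
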